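/- Let k be a positive integer and π a permutation of {1,...,k}. There exists a constant C'' = C''(π) such that for all integers n and a with n ≤ a ≤ n², there exists an n×n 0-1 matrix M containing at least a ones but containing at most C''·a^(2k-1)/n^(2k-2) copies of A_π. (That is, the supersaturation lower bound of C'·a^(2k-1)/n^(2k-2) copies is sharp to within a constant factor depending on π.) -/

import Mathlib

/-- The number of copies of the `k × k` permutation matrix `A_π` in the `n × n`
0-1 matrix `M`: pairs of strictly increasing row/column index tuples such that
`M` has a one at `(x i, y (π i))` for every `i`. -/
noncomputable def matCopies {k n : ℕ} (π : Equiv.Perm (Fin k))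
    (M : Fin n → Fin n → Bool) : ℕ :=
  Nat.card {xy : (Fin k → Fin n) × (Fin k → Fin n) //
    StrictMono xy.1 ∧ StrictMono xy.2 ∧ ∀ i, M (xy.1 i) (xy.2 (π i)) = true}

/-- The number of ones in a 0-1 matrix. -/
noncomputable def matOnes {n : ℕ} (M : Fin n → Fin n → Bool) : ℕ :=
  Nat.card {ij : Fin n × Fin n // M ij.1 ij.2 = true}

set_option maxHeartbeats 1000000
set_option synthInstance.maxHeartbeats 400000

open Function
/-- The symmetrized inversion graph of a permutation. -/
def invGraph {m : ℕ} (π : Equiv.Perm (Fin (m+1))) : SimpleGraph (Fin (m+1)) where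
  Adj i j := i ≠ j ∧ ((i < j ∧ π j < π i) ∨ (j < i ∧ π i < π j))
  symm := ⟨fun i j h => ⟨h.1.symm, h.2.symm⟩⟩
  loopless := ⟨fun i h => h.1 rfl⟩

/-- arithmetic endgame -/
lemma arith_final {n a m w c : ℕ} (hn : 0 < n) (han : n ≤ a) (hnw2 : n * w ≤ a + n - 1)
    (hc : c ≤ n * ((2*w*m+1)^m * (2*w*m+2*w+1)^(m+1))) :
    (c : ℝ) ≤ ((4*m+6 : ℕ) : ℝ)^(2*m+1) * (a:ℝ)^(2*m+1) / (n:ℝ)^(2*m) := by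
  have h1 : c ≤ n * (2*w*m+2*w+1)^(2*m+1) := by
    calc c ≤ n * ((2*w*m+1)^m * (2*w*m+2*w+1)^(m+1)) := hc
      _ ≤ n * ((2*w*m+2*w+1)^m * (2*w*m+2*w+1)^(m+1)) :=
          Nat.mul_le_mul_left _ (Nat.mul_le_mul_right _ (Nat.pow_le_pow_left (by omega) m))
      _ = n * (2*w*m+2*w+1)^(2*m+1) := by rw [← pow_add]; ring_nf
  have h3 : n * w ≤ 2*a := le_trans hnw2 (by omega)
  have hnD : n * (2*w*m+2*w+1) ≤ (4*m+6) * a := by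
    have e1 : n * (2*w*m+2*w+1) = 2*m*(n*w) + 2*(n*w) + n := by ring
    have e2 : (4*m+6) * a = 2*m*(2*a) + 2*(2*a) + 2*a := by ring
    rw [e1, e2]
    exact Nat.add_le_add (Nat.add_le_add (Nat.mul_le_mul_left _ h3)
      (Nat.mul_le_mul_left _ h3)) (by omega)
  have key : c * n^(2*m) ≤ (4*m+6)^(2*m+1) * a^(2*m+1) := by
    calc c * n^(2*m) ≤ (n * (2*w*m+2*w+1)^(2*m+1)) * n^(2*m) :=
        Nat.mul_le_mul_right _ h1
      _ = (n * (2*w*m+2*w+1))^(2*m+1) := by rw [mul_pow]; ring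
      _ ≤ ((4*m+6)*a)^(2*m+1) := Nat.pow_le_pow_left hnD _
      _ = (4*m+6)^(2*m+1) * a^(2*m+1) := mul_pow _ _ _
  rw [le_div_iff₀ (by positivity)]
  exact_mod_cast key
open Function

/-- Either a graph or its complement is preconnected. -/
lemma graph_dichotomy {V : Type*} (G : SimpleGraph V) :
    G.Preconnected ∨ Gᶜ.Preconnected := by
  by_cases h : G.Preconnected
  · exact Or.inl h
  · right
    rw [SimpleGraph.Preconnected] at h
    push_neg at h
    obtain ⟨u, v, huv⟩ := h
    have key : ∀ a b : V, ¬ G.Reachable a b → Gᶜ.Reachable a b := by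
      intro a b hab
      rcases eq_or_ne a b with rfl | hne
      · exact SimpleGraph.Reachable.refl a
      · exact ((SimpleGraph.compl_adj G a b).mpr
          ⟨hne, fun h' => hab h'.reachable⟩).reachable
    intro a b
    by_cases hab : G.Reachable a b
    · by_cases hau : G.Reachable a u
      · have hav : ¬ G.Reachable a v := fun hav => huv ((hau.symm).trans hav)
        have hbv : ¬ G.Reachable b v := fun hbv => huv (hau.symm.trans (hab.trans hbv))
        exact (key a v hav).trans (key b v hbv).symm
      · have hbu : ¬ G.Reachable b u := fun hbu => hau (hab.trans hbu)
        exact (key a u hau).trans (key b u hbu).symm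
    · exact key a b hab
lemma copies_bound {n m w : ℕ} (π : Equiv.Perm (Fin (m+1))) (M : Fin n → Fin n → Bool)
    (H : SimpleGraph (Fin (m+1))) (hconn : H.Preconnected)
    (hstep : ∀ x y : Fin (m+1) → Fin n, StrictMono x → StrictMono y →
      (∀ i, M (x i) (y (π i)) = true) → ∀ i j, H.Adj i j → (x j : ℕ) ≤ (x i : ℕ) + 2*w)
    (e : ℕ → ℕ → ℤ) (D : ℕ) (hD0 : 0 < D)
    (hD : ∀ x y : Fin (m+1) → Fin n, StrictMono x → StrictMono y →
      (∀ i, M (x i) (y (π i)) = true) → (∀ i, (x i : ℕ) ≤ (x 0 : ℕ) + 2*w*m) →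
      ∀ j, 0 ≤ e (x 0) (y j) ∧ e (x 0) (y j) < D)
    (hinj : ∀ x0 y1 y2 : ℕ, e x0 y1 = e x0 y2 → y1 = y2) :
    matCopies π M ≤ n * ((2*w*m+1)^m * D^(m+1)) := by
  have window : ∀ x y : Fin (m+1) → Fin n, StrictMono x → StrictMono y →
      (∀ i, M (x i) (y (π i)) = true) → ∀ i, (x i : ℕ) ≤ (x 0 : ℕ) + 2*w*m := by
    intro x y hx hy hM i
    have hwalk : ∀ (u v : Fin (m+1)) (p : H.Walk u v),
        (x v : ℕ) ≤ (x u : ℕ) + 2*w*p.length := by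
      intro u v p
      induction p with
      | nil => simp
      | @cons u b v h q ih =>
        have h1 := hstep x y hx hy hM u b h
        have h2 : 2*w*((SimpleGraph.Walk.cons h q).length) = 2*w*q.length + 2*w := by
          rw [SimpleGraph.Walk.length_cons]; ring
        omega
    obtain ⟨p⟩ := hconn 0 i
    have hlen : p.toPath.1.length ≤ m := by
      have := SimpleGraph.Walk.IsPath.length_lt p.toPath.2
      simpa using Nat.lt_succ_iff.mp (by simpa using this)
    have := hwalk 0 i p.toPath.1
    have hmul : 2*w*p.toPath.1.length ≤ 2*w*m := Nat.mul_le_mul_left _ hlen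
    omega
  -- the injection
  set T := Fin n × (Fin m → Fin (2*w*m+1)) × (Fin (m+1) → Fin D) with hT
  have hcard : Nat.card T = n * ((2*w*m+1)^m * D^(m+1)) := by
    simp [hT, Nat.card_eq_fintype_card]
  rw [matCopies, ← hcard]
  haveI : Finite T := by infer_instance
  refine Nat.card_le_card_of_injective
    (fun s => (s.1.1 0,
      fun i => ⟨min ((s.1.1 i.succ : ℕ) - (s.1.1 0 : ℕ)) (2*w*m),
        Nat.lt_succ_of_le (Nat.min_le_right _ _)⟩,
      fun j => ⟨min (e (s.1.1 0 : ℕ) (s.1.2 j : ℕ)).toNat (D-1),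
        by have := Nat.min_le_right (e (s.1.1 0 : ℕ) (s.1.2 j : ℕ)).toNat (D-1); omega⟩)) ?_
  rintro ⟨⟨x, y⟩, hx, hy, hM⟩ ⟨⟨x', y'⟩, hx', hy', hM'⟩ hf
  have h0 : x 0 = x' 0 := congrArg Prod.fst hf
  have hxo : ∀ i : Fin m, min ((x i.succ : ℕ) - (x 0 : ℕ)) (2*w*m)
      = min ((x' i.succ : ℕ) - (x' 0 : ℕ)) (2*w*m) := fun i =>
    congrArg Fin.val (congrFun (congrArg (fun t => t.2.1) hf) i)
  have hyo : ∀ j : Fin (m+1), min (e (x 0 : ℕ) (y j : ℕ)).toNat (D-1)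
      = min (e (x' 0 : ℕ) (y' j : ℕ)).toNat (D-1) := fun j =>
    congrArg Fin.val (congrFun (congrArg (fun t => t.2.2) hf) j)
  have wx := window x y hx hy hM
  have wx' := window x' y' hx' hy' hM'
  have hDx := hD x y hx hy hM wx
  have hDx' := hD x' y' hx' hy' hM' wx'
  have h0v : (x 0 : ℕ) = (x' 0 : ℕ) := by rw [h0]
  have hxeq : ∀ i, x i = x' i := by
    intro i
    induction i using Fin.cases with
    | zero => exact h0
    | succ i =>
      have e1 := hxo i
      have b1 : (x i.succ : ℕ) - (x 0 : ℕ) ≤ 2*w*m := by have := wx i.succ; omega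
      have b2 : (x' i.succ : ℕ) - (x' 0 : ℕ) ≤ 2*w*m := by have := wx' i.succ; omega
      rw [min_eq_left b1, min_eq_left b2] at e1
      have l1 : (x 0 : ℕ) ≤ (x i.succ : ℕ) := hx.monotone (Fin.zero_le _)
      have l2 : (x' 0 : ℕ) ≤ (x' i.succ : ℕ) := hx'.monotone (Fin.zero_le _)
      exact Fin.ext (by omega)
  have hyeq : ∀ j, y j = y' j := by
    intro j
    have e1 := hyo j
    obtain ⟨p1, p2⟩ := hDx j
    obtain ⟨p1', p2'⟩ := hDx' j
    have b1 : (e (x 0 : ℕ) (y j : ℕ)).toNat ≤ D - 1 := by omega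
    have b2 : (e (x' 0 : ℕ) (y' j : ℕ)).toNat ≤ D - 1 := by omega
    rw [min_eq_left b1, min_eq_left b2] at e1
    have : e (x 0 : ℕ) (y j : ℕ) = e (x' 0 : ℕ) (y' j : ℕ) := by omega
    rw [← h0v] at this
    exact Fin.ext (hinj _ _ _ this)
  exact Subtype.ext (Prod.ext (funext hxeq) (funext hyeq))
lemma band_ones {n w a : ℕ} (hw : w ≤ n) (ha : a ≤ n * w) :
    a ≤ matOnes (fun i j : Fin n =>
      decide ((i : ℕ) ≤ (j : ℕ) + w ∧ (j : ℕ) ≤ (i : ℕ) + w)) := by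
  have col : ∀ (i : Fin n) (c : Fin w), {j : Fin n //
      ((i : ℕ) ≤ (j : ℕ) + w ∧ (j : ℕ) ≤ (i : ℕ) + w) ∧
      (((i : ℕ) + w < n → (j : ℕ) = i + 1 + c) ∧ (n ≤ (i : ℕ) + w → (j : ℕ) = n - w + c))} := by
    intro i c
    by_cases h : (i : ℕ) + w < n
    · exact ⟨⟨(i : ℕ) + 1 + c, by have := c.isLt; omega⟩, by have := c.isLt; simp; omega⟩
    · exact ⟨⟨n - w + c, by have := c.isLt; have := i.isLt; omega⟩,
        by have := c.isLt; have := i.isLt; simp; omega⟩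
  calc a ≤ n * w := ha
    _ = Nat.card (Fin n × Fin w) := by simp
    _ ≤ _ := by
      rw [matOnes]
      refine Nat.card_le_card_of_injective
        (fun p => ⟨(p.1, (col p.1 p.2).1), by
          have := (col p.1 p.2).2.1; simpa using this⟩) ?_
      rintro ⟨i, c⟩ ⟨i', c'⟩ hf
      have h1 : i = i' := congrArg (fun t => t.1.1) hf
      subst h1
      have h2 : ((col i c).1 : ℕ) = ((col i c').1 : ℕ) :=
        congrArg Fin.val (congrArg (fun t => t.1.2) hf)
      have s1 := (col i c).2.2
      have s2 := (col i c').2.2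
      have hc : (c : ℕ) = (c' : ℕ) := by
        by_cases h : (i : ℕ) + w < n
        · rw [s1.1 h, s2.1 h] at h2; omega
        · rw [s1.2 (by omega), s2.2 (by omega)] at h2; omega
      exact Prod.ext rfl (Fin.ext hc)
theorem supersaturation_01_matrices_sharp (k : ℕ) (hk : 0 < k) (π : Equiv.Perm (Fin k)) :
    ∃ C'' : ℝ, ∀ n a : ℕ, n ≤ a → (a : ℝ) ≤ (n : ℝ) ^ 2 →
      ∃ M : Fin n → Fin n → Bool,
        a ≤ matOnes M ∧
        (matCopies π M : ℝ) ≤ C'' * (a : ℝ) ^ (2 * k - 1) / (n : ℝ) ^ (2 * k - 2) := by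
  obtain ⟨m, rfl⟩ : ∃ m, k = m + 1 := ⟨k - 1, by omega⟩
  refine ⟨((4*m+6 : ℕ) : ℝ)^(2*m+1), ?_⟩
  intro n a han ha2
  have e1 : 2*(m+1)-1 = 2*m+1 := by omega
  have e2 : 2*(m+1)-2 = 2*m := by omega
  rw [e1, e2]
  rcases Nat.eq_zero_or_pos n with rfl | hn
  · -- degenerate case n = 0
    have ha0 : a = 0 := by
      have h : (a:ℝ) ≤ 0 := by simpa using ha2
      exact_mod_cast le_antisymm (by exact_mod_cast h) (Nat.zero_le a)
    subst ha0
    refine ⟨fun _ _ => true, Nat.zero_le _, ?_⟩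
    have hempty : IsEmpty {xy : (Fin (m+1) → Fin 0) × (Fin (m+1) → Fin 0) //
        StrictMono xy.1 ∧ StrictMono xy.2 ∧
          ∀ i, (fun _ _ => true) (xy.1 i) (xy.2 (π i)) = true} :=
      ⟨fun s => (s.1.1 0).elim0⟩
    rw [matCopies, Nat.card_of_isEmpty]
    norm_num
  · -- main case
    have han2 : a ≤ n^2 := by exact_mod_cast (by push_cast; exact ha2 : (a:ℝ) ≤ ((n^2 : ℕ) : ℝ))
    obtain ⟨w, hwdef⟩ : ∃ w, (a + n - 1) / n = w := ⟨_, rfl⟩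
    have hdm := Nat.div_add_mod (a + n - 1) n
    have hmod := Nat.mod_lt (a + n - 1) hn
    rw [hwdef] at hdm
    have key : a ≤ n * w ∧ n * w ≤ a + n - 1 := by
      obtain ⟨p, hp⟩ : ∃ p, n * w = p := ⟨_, rfl⟩
      rw [hp] at hdm ⊢
      omega
    have hwle : w ≤ n := by
      refine Nat.le_of_lt_succ (Nat.lt_of_mul_lt_mul_left (a := n) ?_)
      have : n * (n+1) = n*n + n := by ring
      have hnn : a ≤ n * n := by rw [← pow_two]; exact han2
      calc n * w ≤ a + n - 1 := key.2
        _ < n * n + n := by omega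
        _ = n * (n+1) := by rw [this]
    set D := 2*w*m + 2*w + 1 with hDdef
    have hD0 : 0 < D := by omega
    rcases graph_dichotomy (invGraph π) with hc | hc
    · -- diagonal band
      refine ⟨fun i j : Fin n => decide ((i : ℕ) ≤ (j : ℕ) + w ∧ (j : ℕ) ≤ (i : ℕ) + w),
        band_ones hwle key.1, ?_⟩
      have hcount := copies_bound (w := w) π
        (fun i j : Fin n => decide ((i : ℕ) ≤ (j : ℕ) + w ∧ (j : ℕ) ≤ (i : ℕ) + w))
        (invGraph π) hc ?_
        (fun x0 yj => (yj : ℤ) + w - x0) D hD0 ?_ (fun x0 y1 y2 h => by omega)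
      · exact arith_final hn han key.2 hcount
      · -- hstep
        intro x y hx hy hM i j hadj
        change i ≠ j ∧ ((i < j ∧ π j < π i) ∨ (j < i ∧ π i < π j)) at hadj
        obtain ⟨hne, hcase⟩ := hadj
        rcases hcase with ⟨hij, hpi⟩ | ⟨hji, _⟩
        · have bi := hM i
          have bj := hM j
          simp only [decide_eq_true_eq] at bi bj
          have hyy : (y (π j) : ℕ) < (y (π i) : ℕ) := hy hpi
          omega
        · have : (x j : ℕ) < (x i : ℕ) := hx hji
          omega
      · -- hD
        intro x y hx hy hM hwin j
        have hb := hM (π.symm j)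
        rw [Equiv.apply_symm_apply] at hb
        simp only [decide_eq_true_eq] at hb
        have h1 : (x 0 : ℕ) ≤ (x (π.symm j) : ℕ) := hx.monotone (Fin.zero_le _)
        have h2 := hwin (π.symm j)
        constructor <;> omega
    · -- anti-diagonal band
      refine ⟨fun i j : Fin n =>
        decide ((i : ℕ) ≤ (n - 1 - (j : ℕ)) + w ∧ (n - 1 - (j : ℕ)) ≤ (i : ℕ) + w), ?_, ?_⟩
      · -- ones count via reversal
        have hrev : ∀ i j : Fin n,
            (decide ((i : ℕ) ≤ (n - 1 - ((Fin.rev j : Fin n) : ℕ)) + w ∧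
              (n - 1 - ((Fin.rev j : Fin n) : ℕ)) ≤ (i : ℕ) + w) : Bool)
            = decide ((i : ℕ) ≤ (j : ℕ) + w ∧ (j : ℕ) ≤ (i : ℕ) + w) := by
          intro i j
          have hj := j.isLt
          rw [decide_eq_decide]
          rw [Fin.val_rev]
          omega
        refine le_trans (band_ones hwle key.1) (le_of_eq ?_)
        rw [matOnes, matOnes]
        refine Nat.card_congr ⟨fun s => ⟨(s.1.1, s.1.2.rev), ?_⟩,
          fun s => ⟨(s.1.1, s.1.2.rev), ?_⟩, ?_, ?_⟩
        · have := s.2; dsimp only; rw [hrev]; exact this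
        · have := s.2; dsimp only
          have h2 := hrev s.1.1 s.1.2.rev
          rw [Fin.rev_rev] at h2
          rw [h2] at this; exact this
        · rintro ⟨⟨i, j⟩, h⟩; simp [Fin.rev_rev]
        · rintro ⟨⟨i, j⟩, h⟩; simp [Fin.rev_rev]
      · -- copies count
        have hcount := copies_bound (w := w) π
          (fun i j : Fin n => decide ((i : ℕ) ≤ (n - 1 - (j : ℕ)) + w ∧
            (n - 1 - (j : ℕ)) ≤ (i : ℕ) + w))
          ((invGraph π)ᶜ) hc ?_
          (fun x0 yj => ((n : ℤ) - 1 + w) - x0 - yj) D hD0 ?_ (fun x0 y1 y2 h => by omega)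
        · exact arith_final hn han key.2 hcount
        · -- hstep
          intro x y hx hy hM i j hadj
          rw [SimpleGraph.compl_adj] at hadj
          obtain ⟨hne, hnadj⟩ := hadj
          rcases lt_trichotomy i j with hij | rfl | hji
          · have hpi : π i < π j := by
              have hne2 : π i ≠ π j := fun h => hne (π.injective h)
              rcases lt_or_gt_of_ne hne2 with h | h
              · exact h
              · exact absurd (show i ≠ j ∧ ((i < j ∧ π j < π i) ∨ (j < i ∧ π i < π j)) from ⟨hne, Or.inl ⟨hij, h⟩⟩) hnadj
            have bi := hM i
            have bj := hM j
            simp only [decide_eq_true_eq] at bi bj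
            have hyy : (y (π i) : ℕ) < (y (π j) : ℕ) := hy hpi
            have hy1 := (y (π i)).isLt
            have hy2 := (y (π j)).isLt
            omega
          · exact absurd rfl hne
          · have : (x j : ℕ) < (x i : ℕ) := hx hji
            omega
        · -- hD
          intro x y hx hy hM hwin j
          have hb := hM (π.symm j)
          rw [Equiv.apply_symm_apply] at hb
          simp only [decide_eq_true_eq] at hb
          have h1 : (x 0 : ℕ) ≤ (x (π.symm j) : ℕ) := hx.monotone (Fin.zero_le _)
          have h2 := hwin (π.symm j)
          have h3 := (y j).isLt
          constructor <;> omega
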